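/- Let Λ ⊆ ℝ⁴ be a set of nonzero null vectors such that any two distinct elements of Λ are linearly independent and ⟨u|v⟩ ≤ 0 for all u, v ∈ Λ. Then the following are equivalent: (i) ⟨u|v⟩ < 0 for all distinct u, v ∈ Λ; (ii) every point p of the convex hull of Λ (over ℝ) with Q(p) = 0 is an extreme point of the convex hull of Λ. (The paper's lemma: an achronal subset of Ein₂ is strictly achronal precisely when the intersection points between its convex hull and the null cone are all extreme points of the hull.) -/

import Mathlib

/-- The polar bilinear form of the quadratic form `Q(u,v,x,y) = -u² - v² + x² + y²`
of signature `(2,2)` on `ℝ⁴`. -/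
def polarForm22 (p q : ℝ × ℝ × ℝ × ℝ) : ℝ :=
  -(p.1 * q.1) - p.2.1 * q.2.1 + p.2.2.1 * q.2.2.1 + p.2.2.2 * q.2.2.2

lemma polar_comm (p q : ℝ × ℝ × ℝ × ℝ) : polarForm22 p q = polarForm22 q p := by
  unfold polarForm22; ring

lemma polar_left (a b : ℝ) (x y q : ℝ × ℝ × ℝ × ℝ) :
    polarForm22 (a • x + b • y) q = a * polarForm22 x q + b * polarForm22 y q := by
  unfold polarForm22
  simp [Prod.fst_add, Prod.snd_add, Prod.smul_fst, Prod.smul_snd, smul_eq_mul]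
  ring

lemma polar_right (a b : ℝ) (q x y : ℝ × ℝ × ℝ × ℝ) :
    polarForm22 q (a • x + b • y) = a * polarForm22 q x + b * polarForm22 q y := by
  rw [polar_comm, polar_left, polar_comm x q, polar_comm y q]

/-- Let `Λ` be a set of nonzero null vectors of `ℝ^{2,2}`, pairwise
linearly independent, with pairwise nonpositive scalar products. Then all pairwise
scalar products of distinct elements are negative if and only if every null point
of the convex hull of `Λ` is an extreme point of the hull. -/
theorem strictly_achronal_iff_null_extreme (Λ : Set (ℝ × ℝ × ℝ × ℝ))
    (hnull : ∀ u ∈ Λ, polarForm22 u u = 0)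
    (hnz : ∀ u ∈ Λ, u ≠ 0)
    (hindep : ∀ u ∈ Λ, ∀ v ∈ Λ, u ≠ v → ∀ c : ℝ, v ≠ c • u)
    (hpair : ∀ u ∈ Λ, ∀ v ∈ Λ, polarForm22 u v ≤ 0) :
    (∀ u ∈ Λ, ∀ v ∈ Λ, u ≠ v → polarForm22 u v < 0) ↔
    (∀ p ∈ convexHull ℝ Λ, polarForm22 p p = 0 →
      p ∈ Set.extremePoints ℝ (convexHull ℝ Λ)) := by
  constructor
  · intro hstrict p hp hQp
    -- Step 1: ⟨w|x⟩ ≤ 0 for w ∈ Λ, x ∈ hull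
    have H1 : convexHull ℝ Λ ⊆ {x | ∀ w ∈ Λ, polarForm22 w x ≤ 0} := by
      apply convexHull_min
      · intro v hv w hw; exact hpair w hw v hv
      · intro x hx y hy a b ha hb hab w hw
        simp only [Set.mem_setOf_eq] at hx hy ⊢
        rw [polar_right]
        nlinarith [hx w hw, hy w hw]
    -- Step 2: ⟨x|y⟩ ≤ 0 for x, y ∈ hull
    have H2 : ∀ x ∈ convexHull ℝ Λ, ∀ y ∈ convexHull ℝ Λ, polarForm22 x y ≤ 0 := by
      intro x hx y hy
      have hsub : convexHull ℝ Λ ⊆ {y | ∀ x ∈ convexHull ℝ Λ, polarForm22 x y ≤ 0} := by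
        apply convexHull_min
        · intro v hv x hx
          rw [polar_comm]; exact H1 hx v hv
        · intro y1 h1 y2 h2 a b ha hb hab x hx
          simp only [Set.mem_setOf_eq] at h1 h2 ⊢
          rw [polar_right]
          nlinarith [h1 x hx, h2 x hx]
      exact hsub hy x hx
    -- Step 3: every null point of the hull lies in Λ
    have hpΛ : p ∈ Λ := by
      have hT : convexHull ℝ Λ ⊆
          {x | x ∈ convexHull ℝ Λ ∧ polarForm22 x x ≤ 0 ∧ (polarForm22 x x = 0 → x ∈ Λ)} := by
        apply convexHull_min
        · intro v hv
          exact ⟨subset_convexHull ℝ Λ hv, le_of_eq (hnull v hv), fun _ => hv⟩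
        · rintro x ⟨hxh, hxq, hxm⟩ y ⟨hyh, hyq, hym⟩ a b ha hb hab
          have hzh : a • x + b • y ∈ convexHull ℝ Λ :=
            (convex_convexHull ℝ Λ) hxh hyh ha hb hab
          have hxy : polarForm22 x y ≤ 0 := H2 x hxh y hyh
          have hQz : polarForm22 (a • x + b • y) (a • x + b • y)
              = a * a * polarForm22 x x + 2 * (a * b) * polarForm22 x y
                + b * b * polarForm22 y y := by
            rw [polar_left, polar_right, polar_right, polar_comm y x]; ring
          refine ⟨hzh, ?_, ?_⟩
          · rw [hQz]
            nlinarith [mul_nonneg ha ha, mul_nonneg ha hb, mul_nonneg hb hb, hxq, hyq, hxy]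
          · intro h0
            rw [hQz] at h0
            rcases eq_or_lt_of_le ha with ha0 | ha0
            · have hb1 : b = 1 := by linarith
              have hQy : polarForm22 y y = 0 := by
                rw [← ha0, hb1] at h0; linarith
              have : a • x + b • y = y := by
                rw [← ha0, hb1]; simp
              rw [this]; exact hym hQy
            · rcases eq_or_lt_of_le hb with hb0 | hb0
              · have ha1 : a = 1 := by linarith
                have hQx : polarForm22 x x = 0 := by
                  rw [← hb0, ha1] at h0; linarith
                have : a • x + b • y = x := by
                  rw [← hb0, ha1]; simp
                rw [this]; exact hxm hQx
              · -- a > 0, b > 0 : all three nonpositive terms vanish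
                have t1 : a * a * polarForm22 x x ≤ 0 := by
                  nlinarith [mul_nonneg ha ha, hxq]
                have t2 : 2 * (a * b) * polarForm22 x y ≤ 0 := by
                  nlinarith [mul_nonneg ha hb, hxy]
                have t3 : b * b * polarForm22 y y ≤ 0 := by
                  nlinarith [mul_nonneg hb hb, hyq]
                have hQx : polarForm22 x x = 0 := by
                  nlinarith [t2, t3, mul_pos ha0 ha0]
                have hQy : polarForm22 y y = 0 := by
                  nlinarith [t1, t2, mul_pos hb0 hb0]
                have hxy0 : polarForm22 x y = 0 := by
                  nlinarith [t1, t3, mul_pos ha0 hb0]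
                have hxΛ := hxm hQx
                have hyΛ := hym hQy
                by_cases hxyeq : x = y
                · subst hxyeq
                  have : a • x + b • x = x := by
                    rw [← add_smul, hab, one_smul]
                  rw [this]; exact hxΛ
                · exact absurd hxy0 (ne_of_lt (hstrict x hxΛ y hyΛ hxyeq))
      exact (hT hp).2.2 hQp
    -- Step 4: p is exposed by the functional ⟨p|·⟩, hence extreme
    have Hs : convexHull ℝ Λ ⊆
        {x | polarForm22 p x ≤ 0 ∧ (polarForm22 p x = 0 → x = p)} := by
      apply convexHull_min
      · intro v hv
        refine ⟨hpair p hpΛ v hv, ?_⟩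
        intro h0
        by_contra hvp
        exact absurd h0 (ne_of_lt (hstrict p hpΛ v hv (fun h => hvp h.symm)))
      · rintro x ⟨hx1, hx2⟩ y ⟨hy1, hy2⟩ a b ha hb hab
        have hz : polarForm22 p (a • x + b • y)
            = a * polarForm22 p x + b * polarForm22 p y := polar_right a b p x y
        refine ⟨?_, ?_⟩
        · rw [hz]; nlinarith
        · intro h0
          rw [hz] at h0
          have hax : a * polarForm22 p x = 0 ∧ b * polarForm22 p y = 0 := by
            constructor <;> nlinarith
          rcases eq_or_lt_of_le ha with ha0 | ha0
          · have hb1 : b = 1 := by linarith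
            have hfy : polarForm22 p y = 0 := by
              have := hax.2; rw [hb1] at this; linarith
            rw [← ha0, hb1, hy2 hfy]; simp
          · rcases eq_or_lt_of_le hb with hb0 | hb0
            · have ha1 : a = 1 := by linarith
              have hfx : polarForm22 p x = 0 := by
                have := hax.1; rw [ha1] at this; linarith
              rw [← hb0, ha1, hx2 hfx]; simp
            · have hfx : polarForm22 p x = 0 := by
                rcases mul_eq_zero.mp hax.1 with h | h
                · exact absurd h (ne_of_gt ha0)
                · exact h
              have hfy : polarForm22 p y = 0 := by
                rcases mul_eq_zero.mp hax.2 with h | h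
                · exact absurd h (ne_of_gt hb0)
                · exact h
              rw [hx2 hfx, hy2 hfy, ← add_smul, hab, one_smul]
    refine ⟨hp, ?_⟩
    intro x1 hx1 x2 hx2 hseg
    obtain ⟨a, b, ha, hb, hab, hz⟩ := hseg
    obtain ⟨hf1, he1⟩ := Hs hx1
    obtain ⟨hf2, he2⟩ := Hs hx2
    have h0 : a * polarForm22 p x1 + b * polarForm22 p x2 = 0 := by
      rw [← polar_right, hz]; exact hnull p hpΛ
    have hfx1 : polarForm22 p x1 = 0 := by nlinarith
    have hfx2 : polarForm22 p x2 = 0 := by nlinarith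
    exact he1 hfx1
  · intro hext u hu v hv huv
    rcases lt_or_eq_of_le (hpair u hu v hv) with h | h
    · exact h
    · exfalso
      have hpmem : (1/2 : ℝ) • u + (1/2 : ℝ) • v ∈ convexHull ℝ Λ :=
        (convex_convexHull ℝ Λ) (subset_convexHull ℝ Λ hu) (subset_convexHull ℝ Λ hv)
          (by norm_num) (by norm_num) (by norm_num)
      have hQp : polarForm22 ((1/2 : ℝ) • u + (1/2 : ℝ) • v)
          ((1/2 : ℝ) • u + (1/2 : ℝ) • v) = 0 := by
        rw [polar_left, polar_right, polar_right, polar_comm v u,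
          hnull u hu, hnull v hv, ← h]
        ring
      have hext' := hext _ hpmem hQp
      have hseg : (1/2 : ℝ) • u + (1/2 : ℝ) • v ∈ openSegment ℝ u v :=
        ⟨1/2, 1/2, by norm_num, by norm_num, by norm_num, rfl⟩
      have h1 := hext'.2 (subset_convexHull ℝ Λ hu) (subset_convexHull ℝ Λ hv) hseg
      have h2 := hext'.2 (subset_convexHull ℝ Λ hv) (subset_convexHull ℝ Λ hu)
        (openSegment_symm ℝ u v ▸ hseg)
      exact huv (h1.trans h2.symm)
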